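/- Let n ∈ ℕ₀, G ∈ 𝔗_a^{=n}, and let H ∈ 𝔗_a be reflexive with h_H ∈ {n, n+1}. Then for every ξ ∈ 𝓗(G,H): ξ ∈ 𝓢(G,H) if and only if ξ(P_{i-1})ξ(P_i) ∈ A(H*) for every path P = P_0,…,P_n of length n in G and every 1 ≤ i ≤ n. -/

import Mathlib

/-- A finite digraph: a finite nonempty vertex set `V ⊆ ℕ` together with an
arc set `A ⊆ V × V`. -/
structure Dgraph where
  V : Finset ℕ
  nonempty : V.Nonempty
  A : Finset (ℕ × ℕ)
  A_sub : ∀ p ∈ A, p.1 ∈ V ∧ p.2 ∈ V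

namespace Dgraph

/-- The set of proper arcs of `G`, i.e. the arc set of `G*`. -/
def Astar (G : Dgraph) : Finset (ℕ × ℕ) := G.A.filter (fun p => p.1 ≠ p.2)

/-- `G` is reflexive. -/
def IsRefl (G : Dgraph) : Prop := ∀ v ∈ G.V, (v, v) ∈ G.A

/-- `p` is a path in `G` (a nonempty list of pairwise distinct vertices,
consecutive ones joined by arcs).  Its length as a path is `p.length - 1`. -/
def IsPath (G : Dgraph) (p : List ℕ) : Prop :=
  p ≠ [] ∧ p.Nodup ∧ (∀ v ∈ p, v ∈ G.V) ∧ p.Chain' (fun v w => (v, w) ∈ G.A)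

/-- `p` is a path in `G*`. -/
def IsPathStar (G : Dgraph) (p : List ℕ) : Prop :=
  p ≠ [] ∧ p.Nodup ∧ (∀ v ∈ p, v ∈ G.V) ∧ p.Chain' (fun v w => (v, w) ∈ G.A ∧ v ≠ w)

/-- `G*` contains a closed walk. -/
def HasClosedWalkStar (G : Dgraph) : Prop :=
  ∃ p : List ℕ, (∀ v ∈ p, v ∈ G.V) ∧ p.Chain' (fun v w => (v, w) ∈ G.A ∧ v ≠ w) ∧
    2 ≤ p.length ∧ p.head? = p.getLast?

/-- membership in the class `𝔗ₐ`: `G*` is acyclic. -/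
def MemTa (G : Dgraph) : Prop := ¬ G.HasClosedWalkStar

/-- The height of `G`: the maximal length of a path in `G`. -/
noncomputable def height (G : Dgraph) : ℕ :=
  sSup {n | ∃ p, G.IsPath p ∧ p.length = n + 1}

/-- The interval `[v,w]_G`. -/
def interval (G : Dgraph) (v w : ℕ) : Finset ℕ :=
  G.V.filter (fun z => (v, z) ∈ G.A ∧ (z, w) ∈ G.A)

/-- `ι(v,w)_G`, the cardinality of the interval `[v,w]_G`. -/
def iota (G : Dgraph) (v w : ℕ) : ℕ := (G.interval v w).card

/-- The set `𝓗(G,H)` of homomorphisms from `G` to `H` (represented as total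
maps `ℕ → ℕ`, normalized to `0` outside of `V(G)`). -/
def Hom (G H : Dgraph) : Set (ℕ → ℕ) :=
  {f | (∀ v ∈ G.V, f v ∈ H.V) ∧ (∀ p ∈ G.A, (f p.1, f p.2) ∈ H.A) ∧
    ∀ v, v ∉ G.V → f v = 0}

/-- The set `𝓢(G,H)` of strict homomorphisms from `G` to `H`. -/
def SHom (G H : Dgraph) : Set (ℕ → ℕ) :=
  {f ∈ Hom G H | ∀ p ∈ G.Astar, f p.1 ≠ f p.2}

/-- `μ_ξ(G)`, for a homomorphism `ξ` from `G` into `H`. -/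
def mu (G H : Dgraph) (f : ℕ → ℕ) : ℕ :=
  ∑ p ∈ G.Astar, H.iota (f p.1) (f p.2)

/-- `L` is a subgraph of `G`. -/
def Subgraph (L G : Dgraph) : Prop := L.V ⊆ G.V ∧ L.A ⊆ G.A

/-- Restriction of a map to a vertex set (normalized to `0` outside). -/
def restrict (X : Finset ℕ) (f : ℕ → ℕ) : ℕ → ℕ := fun x => if x ∈ X then f x else 0

/-- `𝓜(L,H)`: homomorphisms from `L` to `H` with maximal `μ`. -/
def MSet (L H : Dgraph) : Set (ℕ → ℕ) :=
  {f ∈ Hom L H | ∀ g ∈ Hom L H, mu L H g ≤ mu L H f}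

/-- `𝓜^𝓛(G,H)`. -/
def MLSet (G H : Dgraph) (𝓛 : Set Dgraph) : Set (ℕ → ℕ) :=
  {f ∈ Hom G H | ∀ L ∈ 𝓛, restrict L.V f ∈ MSet L H}

/-- `𝓙^𝓛_{G,H'}(ξ)` for `ξ ∈ 𝓗(G,H)`. -/
def JSet (G H H' : Dgraph) (𝓛 : Set Dgraph) (ξ : ℕ → ℕ) : Set (ℕ → ℕ) :=
  {ζ ∈ Hom G H' | ∀ L ∈ 𝓛, ∀ p ∈ L.Astar,
    H'.iota (ζ p.1) (ζ p.2) = H.iota (ξ p.1) (ξ p.2)}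

/-- The digraph `P_×` of a path `P = P_0, …, P_ℓ`: vertex set `{P_0,…,P_ℓ}`
and arcs `P_{i-1}P_i`. -/
def pathGraph (P : List ℕ) (h : P ≠ []) : Dgraph where
  V := P.toFinset
  nonempty := by
    obtain ⟨a, t, rfl⟩ := List.exists_cons_of_ne_nil h
    exact ⟨a, by simp⟩
  A := (P.zip P.tail).toFinset
  A_sub := by
    intro p hp
    rw [List.mem_toFinset] at hp
    have h1 := List.of_mem_zip hp
    exact ⟨List.mem_toFinset.mpr h1.1, List.mem_toFinset.mpr (List.mem_of_mem_tail h1.2)⟩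

/-- `𝓛(G)`: the set of the digraphs `P_×` for the paths `P` of length `h_G` in `G`. -/
def LSet (G : Dgraph) : Set Dgraph :=
  {D | ∃ (P : List ℕ) (h : P ≠ []), G.IsPath P ∧ P.length = G.height + 1 ∧
    D = pathGraph P h}

/-- The class `𝕽`: reflexive digraphs `R ∈ 𝔗ₐ` with
`𝓜^{𝓛(R)}(R,R) ∩ 𝓢(R,R) ≠ ∅`. -/
def MemR (R : Dgraph) : Prop :=
  R.MemTa ∧ R.IsRefl ∧ (MLSet R R (LSet R) ∩ SHom R R).Nonempty

/-- `G` is a poset: reflexive, antisymmetric and transitive. -/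
def IsPoset (G : Dgraph) : Prop :=
  G.IsRefl ∧ (∀ v w, (v, w) ∈ G.A → (w, v) ∈ G.A → v = w) ∧
    (∀ u v w, (u, v) ∈ G.A → (v, w) ∈ G.A → (u, w) ∈ G.A)

/-- The class `𝔗ₐ^{=n}`: digraphs in `𝔗ₐ` of height `n` in which every vertex
lies on a path of length `n`. -/
def MemTaEq (n : ℕ) (G : Dgraph) : Prop :=
  G.MemTa ∧ G.height = n ∧ ∀ v ∈ G.V, ∃ p, G.IsPath p ∧ p.length = n + 1 ∧ v ∈ p

/-- A maximal path in `G`: no path in `G` properly contains its vertex set. -/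
def MaximalPath (G : Dgraph) (P : List ℕ) : Prop :=
  G.IsPath P ∧ ∀ Q, G.IsPath Q → (∀ v ∈ P, v ∈ Q) → ∀ v ∈ Q, v ∈ P

end Dgraph

open Dgraph

namespace Dgraph

/-- The level of a vertex: maximal length of a path in `K*` ending at `v`. -/
noncomputable def lvl (K : Dgraph) (v : ℕ) : ℕ :=
  sSup {l | ∃ p : List ℕ, K.IsPathStar p ∧ p.getLast? = some v ∧ p.length = l + 1}

lemma lvl_bdd (K : Dgraph) (v : ℕ) :
    BddAbove {l | ∃ p : List ℕ, K.IsPathStar p ∧ p.getLast? = some v ∧ p.length = l + 1} := by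
  refine ⟨K.V.card, fun l hl => ?_⟩
  obtain ⟨p, ⟨hne, hnd, hmem, _⟩, _, hlen⟩ := hl
  have h1 : p.toFinset ⊆ K.V := fun x hx => hmem x (List.mem_toFinset.mp hx)
  have h2 := Finset.card_le_card h1
  rw [List.toFinset_card_of_nodup hnd] at h2
  omega

lemma height_bdd (K : Dgraph) :
    BddAbove {l | ∃ p : List ℕ, K.IsPath p ∧ p.length = l + 1} := by
  refine ⟨K.V.card, fun l hl => ?_⟩
  obtain ⟨p, ⟨hne, hnd, hmem, _⟩, hlen⟩ := hl
  have h1 : p.toFinset ⊆ K.V := fun x hx => hmem x (List.mem_toFinset.mp hx)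
  have h2 := Finset.card_le_card h1
  rw [List.toFinset_card_of_nodup hnd] at h2
  omega

lemma lvl_nonempty (K : Dgraph) {v : ℕ} (hv : v ∈ K.V) :
    Set.Nonempty {l | ∃ p : List ℕ, K.IsPathStar p ∧ p.getLast? = some v ∧ p.length = l + 1} :=
  ⟨0, [v], ⟨by simp, by simp, by simpa, List.isChain_singleton _⟩, by simp, by simp⟩

lemma lvl_witness (K : Dgraph) {v : ℕ} (hv : v ∈ K.V) :
    ∃ p : List ℕ, K.IsPathStar p ∧ p.getLast? = some v ∧ p.length = K.lvl v + 1 :=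
  Nat.sSup_mem (K.lvl_nonempty hv) (K.lvl_bdd v)

lemma le_lvl (K : Dgraph) {v l : ℕ}
    (h : ∃ p : List ℕ, K.IsPathStar p ∧ p.getLast? = some v ∧ p.length = l + 1) :
    l ≤ K.lvl v :=
  le_csSup (K.lvl_bdd v) h

lemma lvl_le_height (K : Dgraph) {v : ℕ} (hv : v ∈ K.V) : K.lvl v ≤ K.height := by
  obtain ⟨p, ⟨hne, hnd, hmem, hch⟩, hlast, hlen⟩ := K.lvl_witness hv
  exact le_csSup K.height_bdd ⟨p, ⟨hne, hnd, hmem, hch.imp fun _ _ h => h.1⟩, hlen⟩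

lemma lvl_lt (K : Dgraph) (hK : K.MemTa) {u u' : ℕ} (h : (u, u') ∈ K.Astar) :
    K.lvl u + 1 ≤ K.lvl u' := by
  rw [Astar, Finset.mem_filter] at h
  obtain ⟨hA, hne⟩ := h
  obtain ⟨hu, hu'⟩ := K.A_sub _ hA
  obtain ⟨p, ⟨hpne, hnd, hmem, hch⟩, hlast, hlen⟩ := K.lvl_witness hu
  -- u' is not on p
  have hu'p : u' ∉ p := by
    intro hmem'
    obtain ⟨s, t, rfl⟩ := List.append_of_mem hmem'
    refine hK ⟨(u' :: t) ++ [u'], ?_, ?_, by simp, ?_⟩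
    · intro x hx
      rcases List.mem_append.mp hx with hx | hx
      · exact hmem x (List.mem_append.mpr (Or.inr hx))
      · simp at hx; subst hx; exact hmem _ (by simp)
    · have hch2 : (u' :: t).Chain' (fun v w => (v, w) ∈ K.A ∧ v ≠ w) :=
        (List.isChain_append.mp hch).2.1
      show List.IsChain _ _; rw [List.isChain_append]
      refine ⟨hch2, by simp, ?_⟩
      intro x hx y hy
      simp at hy; subst hy
      have : (s ++ u' :: t).getLast? = (u' :: t).getLast? :=
        List.getLast?_append_of_ne_nil _ (by simp)
      rw [hlast] at this
      rw [hx] at this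
      simp at this; subst this
      exact ⟨hA, hne⟩
    · rw [List.getLast?_concat]
      simp
  refine K.le_lvl ⟨p ++ [u'], ⟨by simp, ?_, ?_, ?_⟩, by simp, by simp [hlen]⟩
  · simp [List.nodup_append, hnd, hu'p]; exact fun a ha h => hu'p (h ▸ ha)
  · intro x hx
    rcases List.mem_append.mp hx with hx | hx
    · exact hmem x hx
    · simp at hx; subst hx; exact hu'
  · show List.IsChain _ _; rw [List.isChain_append]
    refine ⟨hch, by simp, ?_⟩
    intro x hx y hy
    rw [hlast] at hx; simp at hx hy; subst hx; subst hy
    exact ⟨hA, hne⟩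

lemma chain'_iff_getElem' {R : ℕ → ℕ → Prop} {l : List ℕ} :
    l.Chain' R ↔ ∀ i (_ : i + 1 < l.length), R l[i] l[i+1] := by
  show List.IsChain _ _ ↔ _; rw [List.isChain_iff_getElem]

lemma lvl_chain (K : Dgraph) (hK : K.MemTa) {P : List ℕ}
    (harc : ∀ j, j + 1 < P.length → (P.getD j 0, P.getD (j + 1) 0) ∈ K.Astar) :
    ∀ i k, i + k < P.length → K.lvl (P.getD i 0) + k ≤ K.lvl (P.getD (i + k) 0) := by
  intro i k
  induction k with
  | zero => intro _; simp
  | succ k ih =>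
    intro h
    have h1 := ih (by omega)
    have h2 := K.lvl_lt hK (harc (i + k) (by omega))
    have h3 : i + (k + 1) = i + k + 1 := by omega
    rw [h3]
    omega

lemma getD_eq {l : List ℕ} {i : ℕ} (h : i < l.length) : l.getD i 0 = l[i] :=
  l.getD_eq_getElem 0 h

lemma getD_map (f : ℕ → ℕ) {l : List ℕ} {i : ℕ} (h : i < l.length) :
    (l.map f).getD i 0 = f (l.getD i 0) := by
  rw [getD_eq (by simpa using h), getD_eq h, List.getElem_map]

lemma isPath_getD_astar {G : Dgraph} {P : List ℕ} (hP : G.IsPath P) :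
    ∀ j, j + 1 < P.length → (P.getD j 0, P.getD (j + 1) 0) ∈ G.Astar := by
  intro j hj
  rw [getD_eq (show j < P.length by omega), getD_eq hj, Astar, Finset.mem_filter]
  refine ⟨chain'_iff_getElem'.mp hP.2.2.2 j hj, fun h => ?_⟩
  have := hP.2.1.getElem_inj_iff.mp h
  omega

lemma lvl_full_path {G : Dgraph} {n : ℕ} (hGta : G.MemTa) (hGh : G.height = n)
    {P : List ℕ} (hP : G.IsPath P) (hlen : P.length = n + 1) :
    ∀ i, i < P.length → G.lvl (P.getD i 0) = i := by
  intro i hi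
  have harc := isPath_getD_astar hP
  have hlow := G.lvl_chain hGta harc 0 i (by omega)
  have hup := G.lvl_chain hGta harc i (n - i) (by omega)
  have hmemn : P.getD n 0 ∈ G.V := by
    rw [getD_eq (by omega)]
    exact hP.2.2.1 _ (List.getElem_mem (by omega))
  have hhn := G.lvl_le_height hmemn
  rw [hGh] at hhn
  have hrw : i + (n - i) = n := by omega
  rw [hrw] at hup
  simp only [Nat.zero_add] at hlow
  omega

end Dgraph

theorem stmt_12 (n : ℕ) (G : Dgraph) (hG : MemTaEq n G)
    (H : Dgraph) (hHt : H.MemTa) (hHr : H.IsRefl)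
    (hh : H.height = n ∨ H.height = n + 1)
    (ξ : ℕ → ℕ) (hξ : ξ ∈ Hom G H) :
    ξ ∈ SHom G H ↔
      ∀ P : List ℕ, G.IsPath P → P.length = n + 1 →
        ∀ i, i + 1 < P.length →
          (ξ (P.getD i 0), ξ (P.getD (i + 1) 0)) ∈ H.Astar := by
  obtain ⟨hGta, hGh, hGfull⟩ := hG
  obtain ⟨hξV, hξA, hξ0⟩ := hξ
  constructor
  · rintro ⟨-, hstrict⟩ P hP hlen i hi
    have harc := isPath_getD_astar hP i hi
    rw [Astar, Finset.mem_filter]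
    exact ⟨hξA _ (Finset.mem_filter.mp harc).1, hstrict _ harc⟩
  · intro hyp
    refine ⟨⟨hξV, hξA, hξ0⟩, ?_⟩
    rintro ⟨v, w⟩ hvw
    show ξ v ≠ ξ w
    intro hcontra
    have hvwA := (Finset.mem_filter.mp hvw).1
    have hvV := (G.A_sub _ hvwA).1
    have hwV := (G.A_sub _ hvwA).2
    obtain ⟨P, hP, hPlen, hvP⟩ := hGfull v hvV
    obtain ⟨Q, hQ, hQlen, hwQ⟩ := hGfull w hwV
    obtain ⟨a, ha, hPa⟩ := List.getElem_of_mem hvP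
    obtain ⟨b, hb, hQb⟩ := List.getElem_of_mem hwQ
    have ha' : a < n + 1 := by rw [← hPlen]; exact ha
    have hb' : b < n + 1 := by rw [← hQlen]; exact hb
    have keyP := lvl_full_path hGta hGh hP hPlen
    have keyQ := lvl_full_path hGta hGh hQ hQlen
    have hPaD : P.getD a 0 = v := by rw [getD_eq ha, hPa]
    have hQbD : Q.getD b 0 = w := by rw [getD_eq hb, hQb]
    have hla : G.lvl v = a := by rw [← hPaD]; exact keyP a ha
    have hlb : G.lvl w = b := by rw [← hQbD]; exact keyQ b hb
    have hab : a + 1 ≤ b := by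
      have h := G.lvl_lt hGta hvw
      omega
    by_cases hcase : b = a + 1
    · -- combined path P.take (a+1) ++ Q.drop (a+1)
      subst hcase
      have hRlen : (P.take (a + 1) ++ Q.drop (a + 1)).length = n + 1 := by
        rw [List.length_append, List.length_take, List.length_drop, hPlen, hQlen]
        omega
      have hgetT : ∀ i, i < a + 1 → (P.take (a + 1) ++ Q.drop (a + 1)).getD i 0 = P.getD i 0 := by
        intro i hi
        rw [List.getD_eq_getElem?_getD, List.getD_eq_getElem?_getD,
          List.getElem?_append_left (by rw [List.length_take, hPlen]; omega),
          List.getElem?_take]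
        simp [hi]
      have hgetQ : ∀ i, a + 1 ≤ i → i < n + 1 →
          (P.take (a + 1) ++ Q.drop (a + 1)).getD i 0 = Q.getD i 0 := by
        intro i hi1 hi2
        rw [List.getD_eq_getElem?_getD, List.getD_eq_getElem?_getD,
          List.getElem?_append_right (by rw [List.length_take, hPlen]; omega),
          List.getElem?_drop]
        have he : a + 1 + (i - (P.take (a + 1)).length) = i := by
          rw [List.length_take, hPlen]
          omega
        rw [he]
      have hnds : (P.take (a + 1) ++ Q.drop (a + 1)).Nodup := by
        refine (hP.2.1.sublist (List.take_sublist _ _)).append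
          (hQ.2.1.sublist (List.drop_sublist _ _)) ?_
        intro x hx1 hx2
        obtain ⟨i, hi, hxi⟩ := List.getElem_of_mem hx1
        obtain ⟨j, hj, hxj⟩ := List.getElem_of_mem hx2
        have hi' : i < a + 1 := by
          rw [List.length_take] at hi
          omega
        have hj' : a + 1 + j < n + 1 := by
          rw [List.length_drop, hQlen] at hj
          omega
        have e1 : P.getD i 0 = x := by
          rw [getD_eq (show i < P.length by rw [hPlen]; omega), ← hxi]
          exact List.getElem_take.symm
        have e2 : Q.getD (a + 1 + j) 0 = x := by
          rw [getD_eq (show a + 1 + j < Q.length by rw [hQlen]; omega), ← hxj]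
          exact (List.getElem_drop ..).symm
        have l1 := keyP i (show i < P.length by rw [hPlen]; omega)
        have l2 := keyQ (a + 1 + j) (show a + 1 + j < Q.length by rw [hQlen]; omega)
        rw [e1] at l1
        rw [e2] at l2
        omega
      have hlastT : (P.take (a + 1)).getLast? = some v := by
        rw [List.getLast?_eq_getElem?]
        have hl : (P.take (a + 1)).length - 1 = a := by
          rw [List.length_take, hPlen]
          omega
        rw [hl, List.getElem?_take]
        simp [List.getElem?_eq_getElem ha, hPa]
      have hheadD : (Q.drop (a + 1)).head? = some w := by
        rw [List.head?_eq_getElem?, List.getElem?_drop, Nat.add_zero,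
          List.getElem?_eq_getElem hb, hQb]
      have hchain : (P.take (a + 1) ++ Q.drop (a + 1)).Chain' (fun x y => (x, y) ∈ G.A) := by
        show List.IsChain _ _; rw [List.isChain_append]
        refine ⟨hP.2.2.2.take _, hQ.2.2.2.drop _, ?_⟩
        intro x hx y hy
        rw [hlastT] at hx
        rw [hheadD] at hy
        simp at hx hy
        subst hx; subst hy
        exact hvwA
      have hmemR : ∀ x ∈ P.take (a + 1) ++ Q.drop (a + 1), x ∈ G.V := by
        intro x hx
        rcases List.mem_append.mp hx with hx | hx
        · exact hP.2.2.1 x (List.mem_of_mem_take hx)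
        · exact hQ.2.2.1 x (List.mem_of_mem_drop hx)
      have hRpath : G.IsPath (P.take (a + 1) ++ Q.drop (a + 1)) := by
        refine ⟨?_, hnds, hmemR, hchain⟩
        intro h
        rw [h] at hRlen
        simp at hRlen
      have hmain := hyp _ hRpath hRlen a (by rw [hRlen]; omega)
      rw [hgetT a (by omega), hgetQ (a + 1) le_rfl (by omega), hPaD, hQbD] at hmain
      exact (Finset.mem_filter.mp hmain).2 hcontra
    · -- b ≥ a + 2 : levels in H separate ξ v and ξ w
      have harcP : ∀ j, j + 1 < (P.map ξ).length →
          ((P.map ξ).getD j 0, (P.map ξ).getD (j + 1) 0) ∈ H.Astar := by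
        intro j hj
        rw [List.length_map] at hj
        rw [getD_map ξ (show j < P.length by omega), getD_map ξ hj]
        exact hyp P hP hPlen j hj
      have harcQ : ∀ j, j + 1 < (Q.map ξ).length →
          ((Q.map ξ).getD j 0, (Q.map ξ).getD (j + 1) 0) ∈ H.Astar := by
        intro j hj
        rw [List.length_map] at hj
        rw [getD_map ξ (show j < Q.length by omega), getD_map ξ hj]
        exact hyp Q hQ hQlen j hj
      have h1 := H.lvl_chain hHt harcP a (n - a) (by rw [List.length_map, hPlen]; omega)
      have h2 := H.lvl_chain hHt harcQ 0 b (by rw [List.length_map, hQlen]; omega)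
      have hrw : a + (n - a) = n := by omega
      rw [hrw] at h1
      simp only [Nat.zero_add] at h2
      rw [getD_map ξ ha, getD_map ξ (show n < P.length by rw [hPlen]; omega), hPaD] at h1
      rw [getD_map ξ (show 0 < Q.length by rw [hQlen]; omega), getD_map ξ hb, hQbD] at h2
      have hPn : ξ (P.getD n 0) ∈ H.V := by
        rw [getD_eq (show n < P.length by rw [hPlen]; omega)]
        exact hξV _ (hP.2.2.1 _ (List.getElem_mem _))
      have h3 := H.lvl_le_height hPn
      have hhle : H.height ≤ n + 1 := by rcases hh with h | h <;> omega
      rw [hcontra] at h1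
      omega
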